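/- Let $K \in \mathbb{R}^{m \times p}$ with rows $w_1^\top, \dots, w_m^\top$, let $K_j$ denote $K$ with row $j$ removed, and let $\epsilon > 0$. Then the $j$-th diagonal entry of $(K K^\top + \epsilon I_m)^{-1}$ equals $\left( \epsilon + \epsilon \, w_j^\top (K_j^\top K_j + \epsilon I_p)^{-1} w_j \right)^{-1}$. -/

import Mathlib

set_option maxHeartbeats 1000000

open Matrix Finset

section Aux

variable {m p : ℕ}

lemma posDef_smul_one {n : ℕ} {ε : ℝ} (hε : 0 < ε) :
    (ε • (1 : Matrix (Fin n) (Fin n) ℝ)).PosDef := by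
  have : ε • (1 : Matrix (Fin n) (Fin n) ℝ) = diagonal (fun _ => ε) := by
    rw [smul_one_eq_diagonal]
  rw [this]
  exact Matrix.PosDef.diagonal (fun _ => hε)

lemma posDef_gram {k : Type*} [Fintype k] (A : Matrix k (Fin p) ℝ) {ε : ℝ} (hε : 0 < ε) :
    (Aᵀ * A + ε • (1 : Matrix (Fin p) (Fin p) ℝ)).PosDef := by
  have h1 : (Aᵀ * A).PosSemidef := by
    have := Matrix.posSemidef_conjTranspose_mul_self A
    rwa [conjTranspose_eq_transpose_of_trivial] at this
  exact Matrix.PosDef.posSemidef_add h1 (posDef_smul_one hε)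

lemma vecMulVec_mulVec' (w v u : Fin p → ℝ) :
    vecMulVec w v *ᵥ u = (v ⬝ᵥ u) • w := by
  ext i
  simp only [vecMulVec_apply, mulVec, dotProduct, Pi.smul_apply, smul_eq_mul, Finset.sum_mul,
    Finset.mul_sum]
  exact Finset.sum_congr rfl fun x _ => by ring

end Aux

theorem stmt9 {m p : ℕ} (K : Matrix (Fin m) (Fin p) ℝ) (j : Fin m) (ε : ℝ) (hε : 0 < ε) :
    (K * Kᵀ + ε • (1 : Matrix (Fin m) (Fin m) ℝ))⁻¹ j j
      = (ε + ε * (K j ⬝ᵥ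
          (((K.submatrix (fun i : {i : Fin m // i ≠ j} => (i : Fin m)) id)ᵀ
              * K.submatrix (fun i : {i : Fin m // i ≠ j} => (i : Fin m)) id
            + ε • (1 : Matrix (Fin p) (Fin p) ℝ))⁻¹ *ᵥ K j)))⁻¹ := by
  set Kj := K.submatrix (fun i : {i : Fin m // i ≠ j} => (i : Fin m)) id with hKj
  set w : Fin p → ℝ := K j with hw
  set C : Matrix (Fin p) (Fin p) ℝ := Kᵀ * K + ε • 1 with hC
  set B : Matrix (Fin p) (Fin p) ℝ := Kjᵀ * Kj + ε • 1 with hB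
  have hεne : ε ≠ 0 := hε.ne'
  -- split of gram matrix
  have hsplit : Kᵀ * K = Kjᵀ * Kj + vecMulVec w w := by
    ext a b
    simp only [Matrix.mul_apply, Matrix.transpose_apply, Matrix.add_apply, vecMulVec_apply,
      hKj, Matrix.submatrix_apply, id_eq, hw]
    rw [Fintype.sum_eq_add_sum_compl j (fun i => K i a * K i b),
      Finset.sum_subtype (p := fun i => i ≠ j) ({j}ᶜ : Finset (Fin m)) (fun i => by simp)
        (fun i => K i a * K i b), add_comm]
  have hCB : C = B + vecMulVec w w := by
    rw [hC, hB, hsplit]; abel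
  -- invertibility
  have hCpd : C.PosDef := posDef_gram K hε
  have hBpd : B.PosDef := posDef_gram Kj hε
  have hCinv : C * C⁻¹ = 1 := mul_nonsing_inv _ (isUnit_iff_isUnit_det _ |>.1 hCpd.isUnit)
  have hBinv : B⁻¹ * B = 1 := nonsing_inv_mul _ (isUnit_iff_isUnit_det _ |>.1 hBpd.isUnit)
  -- Woodbury: inverse of A
  have hA : (K * Kᵀ + ε • (1 : Matrix (Fin m) (Fin m) ℝ))⁻¹
      = ε⁻¹ • (1 - K * C⁻¹ * Kᵀ) := by
    apply inv_eq_right_inv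
    have key : (K * Kᵀ + ε • (1 : Matrix (Fin m) (Fin m) ℝ)) * (1 - K * C⁻¹ * Kᵀ)
        = ε • 1 := by
      have expand : (K * Kᵀ + ε • (1 : Matrix (Fin m) (Fin m) ℝ)) * (1 - K * C⁻¹ * Kᵀ)
          = K * Kᵀ + ε • 1 - K * ((Kᵀ * K + ε • 1) * C⁻¹) * Kᵀ := by
        rw [mul_sub, mul_one]
        congr 1
        simp only [Matrix.mul_add, Matrix.add_mul, Matrix.mul_assoc, Matrix.smul_mul,
          Matrix.mul_smul, Matrix.one_mul]
      rw [expand, ← hC, hCinv, Matrix.mul_one]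
      abel
    rw [Matrix.mul_smul, key, smul_smul, inv_mul_cancel₀ hεne, one_smul]
  -- scalar quantities
  set u : Fin p → ℝ := C⁻¹ *ᵥ w with hu
  set s : ℝ := w ⬝ᵥ u with hs
  set t : ℝ := w ⬝ᵥ (B⁻¹ *ᵥ w) with ht
  have htnn : 0 ≤ t := by
    have := (hBpd.inv).posSemidef.dotProduct_mulVec_nonneg w
    simpa [star_trivial] using this
  have h1t : (1 : ℝ) + t ≠ 0 := by positivity
  -- LHS entry
  have hentry : (K * C⁻¹ * Kᵀ) j j = s := by
    simp only [hs, hu, hw, Matrix.mul_apply, Matrix.transpose_apply, dotProduct, mulVec,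
      Finset.mul_sum, Finset.sum_mul]
    rw [Finset.sum_comm]
    exact Finset.sum_congr rfl fun a _ => Finset.sum_congr rfl fun b _ => by ring
  have hLHS : (K * Kᵀ + ε • (1 : Matrix (Fin m) (Fin m) ℝ))⁻¹ j j = ε⁻¹ * (1 - s) := by
    rw [hA]
    simp [hentry, Matrix.one_apply_eq, Matrix.sub_apply]
  -- relation between s and t
  have hCu : C *ᵥ u = w := by
    rw [hu, mulVec_mulVec, hCinv, one_mulVec]
  have hBu : B *ᵥ u = (1 - s) • w := by
    have h0 : B *ᵥ u + (w ⬝ᵥ u) • w = w := by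
      rw [← vecMulVec_mulVec' w w u, ← add_mulVec, ← hCB, hCu]
    rw [← hs] at h0
    ext i
    have := congrFun h0 i
    simp only [Pi.add_apply, Pi.smul_apply, smul_eq_mul] at this ⊢
    linarith
  have hust : u = (1 - s) • (B⁻¹ *ᵥ w) := by
    have h1 := congrArg (fun v => B⁻¹ *ᵥ v) hBu
    simp only [mulVec_mulVec, hBinv, one_mulVec, mulVec_smul] at h1
    exact h1
  have hst : s = (1 - s) * t := by
    conv_lhs => rw [hs, hust]
    rw [dotProduct_smul, smul_eq_mul, ← ht]
  -- finish
  have h1s : 1 - s = (1 + t)⁻¹ := by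
    have hmul : (1 - s) * (1 + t) = 1 := by linear_combination -hst
    exact eq_inv_of_mul_eq_one_left hmul
  rw [hLHS, h1s, ← mul_inv]
  congr 1
  ring
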